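/- Let H be an s-uniform hypergraph and suppose that for some β > 0 and M > 0, every vertex subset W ⊆ V(H) with |W| ≥ (1−β)·v(H) satisfies e(H[W]) ≥ M. Then there is a subhypergraph H' ⊆ H with at least M edges satisfying Δ_1(H') ≤ ⌈(s/β)·e(H')/v(H)⌉. -/

import Mathlib

/-- Degree of a vertex set `T` in a hypergraph with multiplicities. -/
def hdeg {V : Type*} [DecidableEq V] (H : Multiset (Finset V)) (T : Finset V) : ℕ :=
  (H.filter fun A => T ⊆ A).card

lemma hdeg_mono {V : Type*} [DecidableEq V] {F F' : Multiset (Finset V)} (h : F' ≤ F)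
    (T : Finset V) : hdeg F' T ≤ hdeg F T :=
  Multiset.card_le_card (Multiset.filter_le_filter _ h)

lemma hdeg_cons {V : Type*} [DecidableEq V] (F : Multiset (Finset V)) (A : Finset V)
    (v : V) : hdeg (A ::ₘ F) {v} = hdeg F {v} + (if v ∈ A then 1 else 0) := by
  unfold hdeg
  rw [Multiset.filter_cons]
  by_cases hv : v ∈ A <;> simp [hv, Finset.singleton_subset_iff, add_comm]

lemma sum_hdeg {V : Type*} [Fintype V] [DecidableEq V] (F : Multiset (Finset V)) :
    ∑ v : V, hdeg F {v} = (F.map Finset.card).sum := by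
  induction F using Multiset.induction with
  | empty => simp [hdeg]
  | cons A F ih =>
    simp only [hdeg_cons, Finset.sum_add_distrib, ih, Multiset.map_cons, Multiset.sum_cons]
    rw [Finset.sum_ite_mem, Finset.univ_inter]
    simp [add_comm]

lemma exists_le_card {α : Type*} (F : Multiset α) (m : ℕ) (h : m ≤ Multiset.card F) :
    ∃ F' ≤ F, Multiset.card F' = m := by
  refine ⟨(F.toList.take m : List α), ?_, ?_⟩
  · have h1 : (F.toList.take m).Sublist F.toList := List.take_sublist m F.toList
    have := (Multiset.coe_le).2 h1.subperm
    rwa [Multiset.coe_toList] at this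
  · simp only [Multiset.coe_card, List.length_take]
    rw [Multiset.length_toList]
    omega

theorem stmt_16 {V : Type*} [Fintype V] [DecidableEq V] (s : ℕ)
    (H : Multiset (Finset V)) (hunif : ∀ A ∈ H, A.card = s)
    (β M : ℝ) (hβ : 0 < β) (hM : 0 < M)
    (hdense : ∀ W : Finset V, (1 - β) * (Fintype.card V : ℝ) ≤ (W.card : ℝ) →
      M ≤ ((H.filter fun A => A ⊆ W).card : ℝ)) :
    ∃ H' ≤ H, M ≤ (Multiset.card H' : ℝ) ∧
      ∀ v : V, hdeg H' {v}
        ≤ ⌈(s : ℝ) / β * (Multiset.card H' : ℝ) / (Fintype.card V : ℝ)⌉₊ := by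
  classical
  set N := Fintype.card V with hNdef
  have hMH : M ≤ (Multiset.card H : ℝ) := by
    have h1 := hdense Finset.univ (by
      rw [Finset.card_univ]
      nlinarith [Nat.cast_nonneg (α := ℝ) N])
    rwa [Multiset.filter_eq_self.2 (fun A _ => Finset.subset_univ A)] at h1
  rcases Nat.eq_zero_or_pos s with hs | hs
  · -- s = 0 : all edges are empty, every vertex has degree 0
    refine ⟨H, le_refl _, hMH, fun v => ?_⟩
    have h0 : hdeg H {v} = 0 := by
      unfold hdeg
      rw [Multiset.card_eq_zero, Multiset.filter_eq_nil]
      intro A hA hsub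
      have hA0 : A = ∅ := Finset.card_eq_zero.1 (by rw [hunif A hA, hs])
      rw [hA0] at hsub
      simp at hsub
    simp [h0]
  rcases Nat.eq_zero_or_pos N with hN0 | hN0
  · -- no vertices : H must be empty, contradicting M > 0
    exfalso
    have hE : IsEmpty V := Fintype.card_eq_zero_iff.1 hN0
    have hH0 : H = 0 := by
      rw [Multiset.eq_zero_iff_forall_notMem]
      intro A hA
      have h1 := hunif A hA
      have h2 : A = ∅ := Finset.eq_empty_of_isEmpty A
      rw [h2] at h1
      simp at h1
      omega
    rw [hH0] at hMH
    simp at hMH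
    linarith
  -- main case : s ≥ 1 and N ≥ 1
  set m : ℕ := ⌈M⌉₊ with hmdef
  have hm1 : 1 ≤ m := Nat.one_le_iff_ne_zero.2 (by positivity)
  have hMm : M ≤ (m : ℝ) := Nat.le_ceil M
  have hmM : (m : ℝ) < M + 1 := Nat.ceil_lt_add_one hM.le
  set D : ℕ := ⌈(s : ℝ) / β * (m : ℝ) / (N : ℝ)⌉₊ with hDdef
  have hNpos : (0 : ℝ) < N := by exact_mod_cast hN0
  have hspos : (0 : ℝ) < s := by exact_mod_cast hs
  have hmpos : (0 : ℝ) < m := by exact_mod_cast hm1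
  have hD1 : 1 ≤ D := Nat.one_le_iff_ne_zero.2 (by
    rw [hDdef, Ne, Nat.ceil_eq_zero, not_le]
    positivity)
  have hDge : (s : ℝ) / β * (m : ℝ) / (N : ℝ) ≤ (D : ℝ) := Nat.le_ceil _
  have hsmD : (s : ℝ) * m ≤ (D : ℝ) * (β * N) := by
    rw [div_mul_eq_mul_div, div_div, div_le_iff₀ (by positivity)] at hDge
    linarith
  set P : ℕ → Prop := fun n => ∃ F, F ≤ H ∧ (∀ v, hdeg F {v} ≤ D) ∧ Multiset.card F = n
    with hPdef
  have hP0 : P 0 := ⟨0, Multiset.zero_le H, fun v => by simp [hdeg], rfl⟩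
  set n : ℕ := Nat.findGreatest P (Multiset.card H) with hndef
  obtain ⟨F, hFH, hFdeg, hFcard⟩ : P n :=
    Nat.findGreatest_spec (Nat.zero_le _) hP0
  by_cases hcase : m ≤ n
  · -- trim F down to exactly m edges
    obtain ⟨F', hF'F, hF'card⟩ := exists_le_card F m (by omega)
    refine ⟨F', hF'F.trans hFH, by rw [hF'card]; exact hMm, fun v => ?_⟩
    rw [hF'card]
    exact (hdeg_mono hF'F {v}).trans (hFdeg v)
  · -- derive a contradiction
    exfalso
    push_neg at hcase
    set Z : Finset V := Finset.univ.filter (fun v => hdeg F {v} = D) with hZdef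
    -- maximality: every addable edge meets Z
    have key1 : ∀ A : Finset V, Multiset.count A F < Multiset.count A H →
        ∃ v ∈ A, v ∈ Z := by
      intro A hcount
      by_contra hcon
      push_neg at hcon
      have hF' : P (n + 1) := by
        refine ⟨A ::ₘ F, ?_, ?_, by simp [hFcard]⟩
        · rw [Multiset.le_iff_count]
          intro B
          rw [Multiset.count_cons]
          by_cases hBA : B = A
          · subst hBA; simp; omega
          · simp [hBA]
            exact Multiset.le_iff_count.1 hFH B
        · intro v
          rw [hdeg_cons]
          by_cases hv : v ∈ A
          · have h1 : hdeg F {v} ≠ D := by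
              intro h
              exact absurd (by simp [hZdef, h] : v ∈ Z) (hcon v hv)
            have h2 := hFdeg v
            simp [hv]
            omega
          · simp [hv, hFdeg v]
      have hle : n + 1 ≤ Multiset.card H := by
        obtain ⟨F', hF'H, _, hF'c⟩ := hF'
        rw [← hF'c]
        exact Multiset.card_le_card hF'H
      exact Nat.findGreatest_is_greatest (by omega) hle hF'
    -- counting: Z.card * D ≤ s * n
    have key2 : Z.card * D ≤ s * n := by
      have h1 : Z.card * D = ∑ v ∈ Z, hdeg F {v} := by
        rw [Finset.sum_congr rfl (fun v hv => (Finset.mem_filter.1 hv).2)]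
        simp [mul_comm]
        exact Or.inl rfl
      have h2 : ∑ v ∈ Z, hdeg F {v} ≤ ∑ v : V, hdeg F {v} :=
        Finset.sum_le_sum_of_subset (Finset.subset_univ Z)
      have h3 : ∑ v : V, hdeg F {v} = s * n := by
        rw [sum_hdeg]
        have : F.map Finset.card = Multiset.replicate (Multiset.card F) s := by
          rw [Multiset.eq_replicate]
          constructor
          · simp
          · intro b hb
            obtain ⟨A, hA, rfl⟩ := Multiset.mem_map.1 hb
            exact hunif A (Multiset.mem_of_le hFH hA)
        rw [this, Multiset.sum_replicate, hFcard, smul_eq_mul, mul_comm]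
      omega
    -- hence Z is small
    have key3 : (Z.card : ℝ) < β * N := by
      have h1 : (Z.card : ℝ) * D ≤ (s : ℝ) * n := by exact_mod_cast key2
      have h2 : (s : ℝ) * n < (s : ℝ) * m := by
        have : (n : ℝ) < m := by exact_mod_cast hcase
        nlinarith
      have hDpos : (0 : ℝ) < D := by exact_mod_cast hD1
      nlinarith
    set W : Finset V := Finset.univ \ Z with hWdef
    have hWcard : (W.card : ℝ) = (N : ℝ) - Z.card := by
      rw [hWdef, Finset.card_univ_diff]
      rw [Nat.cast_sub (Finset.card_le_univ Z)]
    have hdenseW := hdense W (by rw [hWcard]; nlinarith)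
    -- all edges inside W are in F
    have hsub : H.filter (fun A => A ⊆ W) ≤ F := by
      rw [Multiset.le_iff_count]
      intro A
      rw [Multiset.count_filter]
      by_cases hAW : A ⊆ W
      · simp only [hAW, if_true]
        by_contra hcon
        push_neg at hcon
        obtain ⟨v, hvA, hvZ⟩ := key1 A hcon
        have := hAW hvA
        rw [hWdef, Finset.mem_sdiff] at this
        exact this.2 hvZ
      · simp [hAW]
    have hle2 : (Multiset.card (H.filter (fun A => A ⊆ W)) : ℝ) ≤ n := by
      have := Multiset.card_le_card hsub
      rw [hFcard] at this
      exact_mod_cast this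
    have hnm : (n : ℝ) + 1 ≤ m := by exact_mod_cast hcase
    linarith
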